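/- Let ρ > 0 and for each n ≥ 1 let (cᵢⁿ)_{i≥1} be a sequence of nonnegative reals such that (n/ρ)·cᵢⁿ is a natural number for all i, cᵢⁿ = 0 for i > n, and ∑_{i=1}^{n} i·cᵢⁿ = ρ. Define Rₙ = (ρ/n) · ∑_{i=1}^{n} ( log((n/ρ)cᵢⁿ)! − (n/ρ)cᵢⁿ · log((n/ρ)cᵢⁿ) + (n/ρ)cᵢⁿ ), with the convention 0·log 0 = 0. Then Rₙ → 0 as n → ∞. -/

import Mathlib

open Filter


lemma sum_range_card_le (s : Finset ℕ) : ∑ i ∈ Finset.range s.card, (i:ℕ) ≤ ∑ i ∈ s, i := by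
  induction s using Finset.induction_on_max with
  | empty => simp
  | insert a s ha ih =>
    have hss : s ⊆ Finset.range a := fun x hx => Finset.mem_range.2 (ha x hx)
    have hca : s.card ≤ a := by simpa using Finset.card_le_card hss
    have hnot : a ∉ s := fun h => lt_irrefl a (ha a h)
    rw [Finset.card_insert_of_notMem hnot, Finset.sum_insert hnot, Finset.sum_range_succ]
    omega

lemma log_fact_lb (m : ℕ) : (m:ℝ) * Real.log m - m ≤ Real.log (Nat.factorial m) := by
  induction m with
  | zero => simp
  | succ k ih =>
    have hfact : (0:ℝ) < (Nat.factorial k : ℝ) := by exact_mod_cast k.factorial_pos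
    have key : (k:ℝ) * Real.log ((k:ℝ)+1) - (k:ℝ) * Real.log k ≤ 1 := by
      rcases Nat.eq_zero_or_pos k with hk | hk
      · subst hk; simp
      · have hkpos : (0:ℝ) < (k:ℝ) := by exact_mod_cast hk
        have := Real.log_le_sub_one_of_pos (x := ((k:ℝ)+1)/k) (by positivity)
        rw [Real.log_div (by positivity) (by positivity)] at this
        have h2 : ((k:ℝ)+1)/k - 1 = 1/k := by field_simp; ring
        rw [h2] at this
        calc (k:ℝ) * Real.log ((k:ℝ)+1) - (k:ℝ) * Real.log k
            = (k:ℝ) * (Real.log ((k:ℝ)+1) - Real.log k) := by ring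
          _ ≤ (k:ℝ) * (1/k) := mul_le_mul_of_nonneg_left this hkpos.le
          _ = 1 := by field_simp
    rw [Nat.factorial_succ, Nat.cast_mul, Real.log_mul (by positivity) (ne_of_gt hfact)]
    push_cast
    nlinarith [ih]

lemma log_fact_ub : ∀ m : ℕ, 1 ≤ m →
    Real.log (Nat.factorial m) ≤ (m:ℝ) * Real.log m - m + 1 + Real.log m := by
  intro m hm
  induction m, hm using Nat.le_induction with
  | base => simp
  | succ k hk ih =>
    have hkpos : (0:ℝ) < (k:ℝ) := by exact_mod_cast hk
    have hfact : (0:ℝ) < (Nat.factorial k : ℝ) := by exact_mod_cast k.factorial_pos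
    have key : (1:ℝ) ≤ ((k:ℝ)+1) * (Real.log ((k:ℝ)+1) - Real.log k) := by
      have := Real.log_le_sub_one_of_pos (x := (k:ℝ)/((k:ℝ)+1)) (by positivity)
      rw [Real.log_div (by positivity) (by positivity)] at this
      have h2 : (k:ℝ)/((k:ℝ)+1) - 1 = -(1/((k:ℝ)+1)) := by field_simp; ring
      rw [h2] at this
      have h3 : 1/((k:ℝ)+1) ≤ Real.log ((k:ℝ)+1) - Real.log k := by linarith
      calc (1:ℝ) = ((k:ℝ)+1) * (1/((k:ℝ)+1)) := by field_simp
        _ ≤ ((k:ℝ)+1) * (Real.log ((k:ℝ)+1) - Real.log k) :=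
            mul_le_mul_of_nonneg_left h3 (by positivity)
    rw [Nat.factorial_succ, Nat.cast_mul, Real.log_mul (by positivity) (ne_of_gt hfact)]
    push_cast
    nlinarith [ih]


/-- Stirling remainder along states of E_ρ^n tends to 0.
The state cⁿ is encoded by the natural numbers m n i = (n/ρ)·cᵢⁿ. -/
theorem stmt4 (ρ : ℝ) (hρ : 0 < ρ) (m : ℕ → ℕ → ℕ)
    (hsupp : ∀ n : ℕ, 1 ≤ n → ∀ i, n < i → m n i = 0)
    (hmass : ∀ n : ℕ, 1 ≤ n →
      ∑ i ∈ Finset.Icc 1 n, (i : ℝ) * ((ρ / (n:ℝ)) * m n i) = ρ) :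
    Tendsto (fun n : ℕ =>
        (ρ / n) * ∑ i ∈ Finset.Icc 1 n,
          (Real.log (Nat.factorial (m n i))
            - (m n i : ℝ) * Real.log (m n i) + (m n i : ℝ)))
      atTop (nhds 0) := by
  set R := fun n : ℕ =>
      (ρ / n) * ∑ i ∈ Finset.Icc 1 n,
        (Real.log (Nat.factorial (m n i))
          - (m n i : ℝ) * Real.log (m n i) + (m n i : ℝ)) with hR
  set g := fun n : ℕ =>
      ρ * Real.sqrt 3 * ((1 + Real.log n) / Real.sqrt n) with hg
  -- nonnegativity of each summand
  have hf0 : ∀ k : ℕ, 0 ≤ Real.log (Nat.factorial k)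
      - (k : ℝ) * Real.log k + (k : ℝ) := by
    intro k; have := log_fact_lb k; linarith
  have hR0 : ∀ n : ℕ, 0 ≤ R n := by
    intro n
    apply mul_nonneg (by positivity)
    exact Finset.sum_nonneg fun i _ => hf0 _
  -- main bound for n ≥ 1
  have hRg : ∀ n : ℕ, 1 ≤ n → R n ≤ g n := by
    intro n hn
    have hn' : (0:ℝ) < n := by exact_mod_cast hn
    -- natural mass identity
    have hX : ∑ i ∈ Finset.Icc 1 n, i * m n i = n := by
      have h := hmass n hn
      have h2 : (ρ / n) * ∑ i ∈ Finset.Icc 1 n, ((i:ℝ) * (m n i))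
          = ∑ i ∈ Finset.Icc 1 n, (i:ℝ) * ((ρ / n) * m n i) := by
        rw [Finset.mul_sum]
        exact Finset.sum_congr rfl fun i _ => by ring
      have hne : ρ / (n:ℝ) ≠ 0 := by positivity
      have h4 : (ρ / n) * ∑ i ∈ Finset.Icc 1 n, ((i:ℝ) * (m n i))
          = (ρ / n) * n := by
        rw [h2, h]; field_simp
      have h3 : ∑ i ∈ Finset.Icc 1 n, ((i:ℝ) * (m n i)) = n :=
        mul_left_cancel₀ hne h4
      exact_mod_cast (by push_cast; exact h3 :
        ((∑ i ∈ Finset.Icc 1 n, i * m n i : ℕ) : ℝ) = (n:ℝ))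
    set S := (Finset.Icc 1 n).filter (fun i => m n i ≠ 0) with hS
    set f := fun i => Real.log (Nat.factorial (m n i))
          - (m n i : ℝ) * Real.log (m n i) + (m n i : ℝ) with hfdef
    have hsum_eq : ∑ i ∈ Finset.Icc 1 n, f i = ∑ i ∈ S, f i := by
      refine (Finset.sum_filter_of_ne ?_).symm
      intro i _ hfi
      intro hmi
      apply hfi
      simp [hfdef, hmi]
    -- bounds on m n i for i ∈ S
    have hmle : ∀ i ∈ S, 1 ≤ m n i ∧ m n i ≤ n := by
      intro i hi
      rw [hS, Finset.mem_filter] at hi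
      obtain ⟨hiI, hine⟩ := hi
      have h1 : 1 ≤ m n i := Nat.one_le_iff_ne_zero.2 hine
      have hi1 : 1 ≤ i := (Finset.mem_Icc.1 hiI).1
      have : i * m n i ≤ n := by
        have hle := Finset.single_le_sum (f := fun j => j * m n j)
          (fun j _ => Nat.zero_le _) hiI
        rw [hX] at hle
        exact hle
      exact ⟨h1, le_trans (Nat.le_mul_of_pos_left _ hi1) this⟩
    -- per-term upper bound
    have hfub : ∀ i ∈ S, f i ≤ 1 + Real.log n := by
      intro i hi
      obtain ⟨h1, h2⟩ := hmle i hi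
      have := log_fact_ub (m n i) h1
      have hlog : Real.log (m n i) ≤ Real.log n :=
        Real.log_le_log (by exact_mod_cast h1) (by exact_mod_cast h2)
      simp only [hfdef]
      linarith
    -- card bound
    have hSi : ∑ i ∈ S, i ≤ n := by
      calc ∑ i ∈ S, i ≤ ∑ i ∈ S, i * m n i :=
            Finset.sum_le_sum fun i hi =>
              Nat.le_mul_of_pos_right i (hmle i hi).1
        _ ≤ ∑ i ∈ Finset.Icc 1 n, i * m n i :=
            Finset.sum_le_sum_of_subset (Finset.filter_subset _ _)
        _ = n := hX
    have hK2 : S.card * S.card ≤ 3 * n := by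
      have h1 : S.card * (S.card - 1) ≤ 2 * n := by
        have := sum_range_card_le S
        have h2 := Finset.sum_range_id_mul_two S.card
        omega
      have h3 : S.card ≤ n := by
        calc S.card ≤ (Finset.Icc 1 n).card := Finset.card_filter_le _ _
          _ = n := by simp
      rcases Nat.eq_zero_or_pos S.card with h | h
      · simp [h]
      · have heq : S.card * S.card = S.card * (S.card - 1) + S.card := by
          rcases S.card with _ | j
          · simp
          · simp [Nat.succ_sub_one]; ring
        omega
    have hKr : (S.card : ℝ) ≤ Real.sqrt 3 * Real.sqrt n := by
      have h1 : ((S.card : ℝ))^2 ≤ 3 * n := by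
        rw [sq]
        exact_mod_cast hK2
      calc (S.card : ℝ) = Real.sqrt ((S.card:ℝ)^2) := (Real.sqrt_sq (by positivity)).symm
        _ ≤ Real.sqrt (3 * n) := Real.sqrt_le_sqrt h1
        _ = Real.sqrt 3 * Real.sqrt n := Real.sqrt_mul (by norm_num) _
    -- assemble
    have hLnn : (0:ℝ) ≤ 1 + Real.log n := by
      have : (0:ℝ) ≤ Real.log n := Real.log_nonneg (by exact_mod_cast hn)
      linarith
    have hsumle : ∑ i ∈ S, f i ≤ (S.card : ℝ) * (1 + Real.log n) := by
      calc ∑ i ∈ S, f i ≤ ∑ _i ∈ S, (1 + Real.log n) :=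
            Finset.sum_le_sum hfub
        _ = (S.card : ℝ) * (1 + Real.log n) := by
            rw [Finset.sum_const, nsmul_eq_mul]
    have hsq : Real.sqrt n * Real.sqrt n = n := Real.mul_self_sqrt hn'.le
    have hsqpos : (0:ℝ) < Real.sqrt n := Real.sqrt_pos.2 hn'
    calc R n = (ρ / n) * ∑ i ∈ Finset.Icc 1 n, f i := rfl
      _ = (ρ / n) * ∑ i ∈ S, f i := by rw [hsum_eq]
      _ ≤ (ρ / n) * ((S.card : ℝ) * (1 + Real.log n)) :=
          mul_le_mul_of_nonneg_left hsumle (by positivity)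
      _ ≤ (ρ / n) * ((Real.sqrt 3 * Real.sqrt n) * (1 + Real.log n)) := by
          apply mul_le_mul_of_nonneg_left _ (by positivity)
          exact mul_le_mul_of_nonneg_right hKr hLnn
      _ = g n := by
          show _ = ρ * Real.sqrt 3 * ((1 + Real.log n) / Real.sqrt n)
          field_simp
          linear_combination hsq
  -- limit of g
  have hgtend : Tendsto g atTop (nhds 0) := by
    have hlog : Tendsto (fun x : ℝ => Real.log x / x ^ ((1:ℝ)/2)) atTop (nhds 0) :=
      (_root_.isLittleO_log_rpow_atTop (by norm_num)).tendsto_div_nhds_zero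
    have hinv : Tendsto (fun x : ℝ => (x ^ ((1:ℝ)/2))⁻¹) atTop (nhds 0) :=
      (tendsto_rpow_atTop (by norm_num : (0:ℝ) < 1/2)).inv_tendsto_atTop
    have hsum : Tendsto (fun x : ℝ => (1 + Real.log x) / x ^ ((1:ℝ)/2)) atTop (nhds 0) := by
      have := hinv.add hlog
      simp only [add_zero] at this
      refine this.congr' ?_
      filter_upwards [eventually_gt_atTop (0:ℝ)] with x hx
      rw [add_div, one_div]
      norm_num
    have hcast : Tendsto (fun n : ℕ => (n:ℝ)) atTop atTop := tendsto_natCast_atTop_atTop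
    have hcomp := (hsum.comp hcast).const_mul (ρ * Real.sqrt 3)
    simp only [mul_zero] at hcomp
    refine hcomp.congr' ?_
    filter_upwards [eventually_ge_atTop 1] with n hn
    have hn' : (0:ℝ) ≤ (n:ℝ) := by positivity
    simp only [Function.comp, hg, Real.sqrt_eq_rpow]
  exact squeeze_zero' (Eventually.of_forall hR0) (eventually_atTop.2 ⟨1, hRg⟩) hgtend
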